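/- Let n ≥ p ≥ 1 and ψ₁,…,ψₙ > 0, and let βᵢ be the coefficient of sⁱ in ∏_{j=1}^n (1 + ψⱼ s). Define F(s) = (∑_{i=p}^n βᵢ sⁱ)/∏_{i=1}^n (1 + ψᵢ s) for s ≥ 0 and F(s) = 0 for s < 0. Then F is a valid cumulative distribution function on ℝ: it is monotone nondecreasing, right-continuous, F(s) → 0 as s → −∞, and F(s) → 1 as s → +∞. -/

import Mathlib

open Finset Polynomial Filter

/-- The closed-form expression of Theorem 3.1 is a valid CDF on ℝ. -/
theorem stmt_2 (n p : ℕ) (hp : 1 ≤ p) (hnp : p ≤ n) (ψ : Fin n → ℝ)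
    (hpos : ∀ i, 0 < ψ i)
    (β : ℕ → ℝ)
    (hβ : ∀ i, β i = (∏ j, (1 + C (ψ j) * X : Polynomial ℝ)).coeff i)
    (F : ℝ → ℝ)
    (hF : ∀ s : ℝ,
      F s = if 0 ≤ s then
        (∑ i ∈ Finset.Icc p n, β i * s ^ i) / ∏ i, (1 + ψ i * s)
      else 0) :
    Monotone F ∧ (∀ s : ℝ, ContinuousWithinAt F (Set.Ici s) s) ∧
      Tendsto F atBot (nhds 0) ∧ Tendsto F atTop (nhds 1) := by
  set Q : Polynomial ℝ := ∏ j, (1 + C (ψ j) * X) with hQ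
  -- coefficients are nonnegative
  have hβ0 : ∀ i, 0 ≤ β i := by
    intro i
    rw [hβ]
    revert i
    refine Finset.prod_induction _ (fun q : Polynomial ℝ => ∀ k, 0 ≤ q.coeff k) ?_ ?_ ?_
    · intro q r hq hr k
      rw [coeff_mul]
      exact Finset.sum_nonneg fun x _ => mul_nonneg (hq _) (hr _)
    · intro k
      rw [coeff_one]
      split_ifs <;> norm_num
    · intro j _ k
      rw [coeff_add, coeff_one, coeff_C_mul, coeff_X]
      have := (hpos j).le
      split_ifs <;> simp_all
  -- each factor is nonzero
  have hQne : ∀ j : Fin n, (1 + C (ψ j) * X : Polynomial ℝ) ≠ 0 := by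
    intro j h
    have := congrArg (eval 0) h
    simp at this
  have hQne0 : Q ≠ 0 := Finset.prod_ne_zero_iff.2 fun j _ => hQne j
  have hfacdeg : ∀ j : Fin n, (1 + C (ψ j) * X : Polynomial ℝ).natDegree = 1 := by
    intro j
    rw [add_comm, ← C_1, natDegree_add_C, natDegree_C_mul_X _ (hpos j).ne']
  have hQdeg : Q.natDegree = n := by
    rw [hQ, natDegree_prod _ _ fun j _ => hQne j]
    simp [hfacdeg]
  -- the polynomial identity: sum of all coefficients times powers equals the product
  have hid : ∀ s : ℝ,
      (∑ i ∈ range p, β i * s ^ i) + (∑ i ∈ Finset.Icc p n, β i * s ^ i)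
        = ∏ i, (1 + ψ i * s) := by
    intro s
    have h1 : (∑ i ∈ range (n + 1), β i * s ^ i) = ∏ i, (1 + ψ i * s) := by
      have he := eval_eq_sum_range' (by omega : Q.natDegree < n + 1) s
      have he2 : eval s Q = ∏ i, (1 + ψ i * s) := by
        rw [hQ, eval_prod]
        simp
      rw [← he2, he]
      refine Finset.sum_congr rfl fun i _ => by rw [hβ]
    rw [← h1, range_eq_Ico, range_eq_Ico, ← Finset.Ico_add_one_right_eq_Icc]
    exact Finset.sum_Ico_consecutive (fun i => β i * s ^ i) (by omega : 0 ≤ p) (by omega : p ≤ n + 1)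
  have hdpos : ∀ s : ℝ, 0 ≤ s → 0 < ∏ i, (1 + ψ i * s) :=
    fun s hs => Finset.prod_pos fun i _ => by nlinarith [hpos i, mul_nonneg (hpos i).le hs]
  -- auxiliary functions
  set A : ℝ → ℝ := fun s => ∑ i ∈ Finset.Icc p n, β i * s ^ i with hA
  set B : ℝ → ℝ := fun s => ∑ i ∈ range p, β i * s ^ i with hB
  set g : ℝ → ℝ := fun s => A s / (B s + A s) with hg
  have hFg : ∀ s : ℝ, 0 ≤ s → F s = g s := by
    intro s hs
    rw [hF s, if_pos hs, hg, ← hid s]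
  have hF0 : ∀ s : ℝ, s < 0 → F s = 0 := fun s hs => by rw [hF s, if_neg (not_le.2 hs)]
  have hBApos : ∀ s : ℝ, 0 ≤ s → 0 < B s + A s := fun s hs => by
    rw [hB, hA, hid s]; exact hdpos s hs
  have hAnonneg : ∀ s : ℝ, 0 ≤ s → 0 ≤ A s := fun s hs =>
    Finset.sum_nonneg fun i _ => mul_nonneg (hβ0 i) (pow_nonneg hs i)
  have hgnonneg : ∀ s : ℝ, 0 ≤ s → 0 ≤ g s := fun s hs =>
    div_nonneg (hAnonneg s hs) (hBApos s hs).le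
  -- derivatives
  have hAd : ∀ s : ℝ, HasDerivAt A (∑ i ∈ Finset.Icc p n, β i * (i * s ^ (i - 1))) s := by
    intro s
    exact HasDerivAt.fun_sum fun i _ => (hasDerivAt_pow i s).const_mul (β i)
  have hBd : ∀ s : ℝ, HasDerivAt B (∑ i ∈ range p, β i * (i * s ^ (i - 1))) s := by
    intro s
    exact HasDerivAt.fun_sum fun i _ => (hasDerivAt_pow i s).const_mul (β i)
  have hgd : ∀ s : ℝ, 0 ≤ s → HasDerivAt g
      (((∑ i ∈ Finset.Icc p n, β i * (i * s ^ (i - 1))) * (B s + A s)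
        - A s * ((∑ i ∈ range p, β i * (i * s ^ (i - 1)))
          + (∑ i ∈ Finset.Icc p n, β i * (i * s ^ (i - 1))))) / (B s + A s) ^ 2) s := by
    intro s hs
    exact (hAd s).div ((hBd s).add (hAd s)) (hBApos s hs).ne'
  -- key inequality: numerator of the derivative is nonnegative
  have hnum : ∀ s : ℝ, 0 < s →
      A s * (∑ i ∈ range p, β i * (i * s ^ (i - 1)))
        ≤ (∑ i ∈ Finset.Icc p n, β i * (i * s ^ (i - 1))) * B s := by
    intro s hs
    rw [hA, hB, Finset.sum_mul_sum, Finset.sum_mul_sum]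
    refine Finset.sum_le_sum fun i hi => Finset.sum_le_sum fun j hj => ?_
    have hip : p ≤ i := (Finset.mem_Icc.1 hi).1
    have hjp : j < p := Finset.mem_range.1 hj
    rcases Nat.eq_zero_or_pos j with hj0 | hj1
    · subst hj0
      simp only [Nat.cast_zero, zero_mul, mul_zero]
      have : (0:ℝ) ≤ β i * (↑i * s ^ (i - 1)) * (β 0 * s ^ 0) :=
        mul_nonneg (mul_nonneg (hβ0 i) (by positivity)) (mul_nonneg (hβ0 0) (by positivity))
      linarith
    · have h1 : β i * s ^ i * (β j * (↑j * s ^ (j - 1)))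
          = (β i * β j) * (j : ℝ) * (s ^ i * s ^ (j - 1)) := by ring
      have h2 : β i * (↑i * s ^ (i - 1)) * (β j * s ^ j)
          = (β i * β j) * (i : ℝ) * (s ^ (i - 1) * s ^ j) := by ring
      rw [h1, h2, ← pow_add, ← pow_add, show i + (j - 1) = i - 1 + j by omega]
      exact mul_le_mul
        (mul_le_mul_of_nonneg_left (Nat.cast_le.2 (by omega)) (mul_nonneg (hβ0 i) (hβ0 j)))
        le_rfl (by positivity)
        (mul_nonneg (mul_nonneg (hβ0 i) (hβ0 j)) (Nat.cast_nonneg i))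
  -- monotonicity on [0, ∞)
  have hcontA : Continuous A := by
    exact continuous_finset_sum _ fun i _ => continuous_const.mul (continuous_pow i)
  have hcontB : Continuous B := by
    exact continuous_finset_sum _ fun i _ => continuous_const.mul (continuous_pow i)
  have hcontg : ContinuousOn g (Set.Ici 0) :=
    ContinuousOn.div hcontA.continuousOn (hcontB.add hcontA).continuousOn
      fun s hs => (hBApos s hs).ne'
  have hmono : MonotoneOn g (Set.Ici 0) := by
    refine monotoneOn_of_deriv_nonneg (convex_Ici 0) hcontg ?_ ?_
    · rw [interior_Ici]
      exact fun s hs => ((hgd s (le_of_lt hs)).differentiableAt).differentiableWithinAt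
    · rw [interior_Ici]
      intro s hs
      rw [(hgd s hs.le).deriv]
      have h := hnum s hs
      have hsq : (0:ℝ) < (B s + A s) ^ 2 := pow_pos (hBApos s hs.le) 2
      apply div_nonneg _ hsq.le
      nlinarith
  have hMono : Monotone F := by
    intro x y hxy
    rcases lt_or_ge x 0 with hx | hx
    · rcases lt_or_ge y 0 with hy | hy
      · rw [hF0 x hx, hF0 y hy]
      · rw [hF0 x hx, hFg y hy]; exact hgnonneg y hy
    · have hy : (0:ℝ) ≤ y := hx.trans hxy
      rw [hFg x hx, hFg y hy]
      exact hmono hx hy hxy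
  refine ⟨hMono, ?_, ?_, ?_⟩
  · -- right continuity
    intro s
    rcases lt_or_ge s 0 with hs | hs
    · have hev : F =ᶠ[nhds s] fun _ => 0 :=
        Filter.eventuallyEq_of_mem (IsOpen.mem_nhds isOpen_Iio hs) fun t ht => hF0 t ht
      exact (continuousAt_const.congr hev.symm).continuousWithinAt
    · have h1 : ContinuousWithinAt g (Set.Ici s) s :=
        (hcontg s hs).mono (Set.Ici_subset_Ici.2 hs)
      exact h1.congr (fun t ht => hFg t (hs.trans ht)) (hFg s hs)
  · -- limit at -∞
    refine Tendsto.congr' ?_ tendsto_const_nhds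
    filter_upwards [eventually_lt_atBot (0:ℝ)] with t ht
    exact (hF0 t ht).symm
  · -- limit at +∞
    set Bp : Polynomial ℝ := ∑ j ∈ range p, C (β j) * X ^ j with hBp
    have hdegB : Bp.degree < Q.degree := by
      rw [degree_eq_natDegree hQne0, hQdeg]
      have h1 : Bp.degree ≤ ((p - 1 : ℕ) : WithBot ℕ) := by
        refine le_trans (degree_sum_le _ _) (Finset.sup_le fun j hj => ?_)
        refine le_trans (degree_C_mul_X_pow_le j (β j)) ?_
        have hjp := Finset.mem_range.1 hj
        exact_mod_cast (by omega : j ≤ p - 1)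
      exact lt_of_le_of_lt h1 (by exact_mod_cast (by omega : p - 1 < n))
    have hBQ : Tendsto (fun x => eval x Bp / eval x Q) atTop (nhds 0) :=
      div_tendsto_zero_of_degree_lt Bp Q hdegB
    have hone : Tendsto (fun x => 1 - eval x Bp / eval x Q) atTop (nhds 1) := by
      have := hBQ.const_sub (1:ℝ)
      simpa using this
    refine Tendsto.congr' ?_ hone
    filter_upwards [eventually_ge_atTop (0:ℝ)] with s hs
    have hevalB : eval s Bp = B s := by
      rw [hBp, hB]
      simp [eval_finset_sum]
    have hevalQ : eval s Q = B s + A s := by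
      rw [hB, hA, hid s, hQ, eval_prod]
      simp
    rw [hevalB, hevalQ, hFg s hs, hg]
    have hne := (hBApos s hs).ne'
    field_simp
    ring
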